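/- Let N, M ≥ 1 be natural numbers and let S = {1, …, N} × {1, …, M} ⊆ ℤ² be a rectangle of vertices of the lattice graph ℤ². Then for every φ : ℤ² → ℂ with support contained in S, (∑_{v∈ℤ²} |φ(v)|²)^{1/2} ≤ (1/2)·sin^{−2}(π/(2·max(N,M)+2))·(∑_{v∈ℤ²} |(𝓛φ)(v)|²)^{1/2}, where 𝓛 is the normalized Laplacian of ℤ². -/

import Mathlib

open scoped Real
open Finset

/-- The normalized Laplacian of the lattice graph `ℤ²`:
`(𝓛 f)(k,l) = f(k,l) − (f(k−1,l) + f(k+1,l) + f(k,l−1) + f(k,l+1))/4`. -/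
noncomputable def lapZ2 (f : ℤ × ℤ → ℂ) (p : ℤ × ℤ) : ℂ :=
  f p - (f (p.1 - 1, p.2) + f (p.1 + 1, p.2) + f (p.1, p.2 - 1) + f (p.1, p.2 + 1)) / 4

/-- AM–GM with weights. -/
lemma amgm_wt {w1 w2 : ℝ} (hw1 : 0 < w1) (hw2 : 0 < w2) (a b : ℝ) :
    2 * (a * b) ≤ (w2 / w1) * a ^ 2 + (w1 / w2) * b ^ 2 := by
  have h12 : 0 < w1 * w2 := mul_pos hw1 hw2
  have h : (w2 / w1) * a ^ 2 + (w1 / w2) * b ^ 2 - 2 * (a * b)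
      = (w2 * a - w1 * b) ^ 2 / (w1 * w2) := by
    field_simp
    ring
  linarith [h, div_nonneg (sq_nonneg (w2 * a - w1 * b)) h12.le]

/-- Discrete path inequality, induction version with boundary term. -/
lemma path_ind (θ : ℝ) (a : ℕ → ℝ) (n : ℕ) (hn : 1 ≤ n) :
    (∀ k : ℕ, 1 ≤ k → k ≤ n → 0 < Real.sin (k * θ)) →
      ∑ k ∈ Finset.Icc 1 (n - 1), 2 * (a k * a (k + 1)) +
          (Real.sin ((n + 1) * θ) / Real.sin (n * θ)) * a n ^ 2
        ≤ 2 * Real.cos θ * ∑ k ∈ Finset.Icc 1 n, a k ^ 2 := by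
  induction n, hn using Nat.le_induction with
  | base =>
    intro hpos
    have h1 : 0 < Real.sin ((1 : ℕ) * θ) := hpos 1 le_rfl le_rfl
    push_cast at h1 ⊢
    rw [one_mul] at h1
    rw [show ((1:ℝ) + 1) * θ = 2 * θ by ring, Real.sin_two_mul, one_mul]
    rw [show Finset.Icc 1 0 = (∅ : Finset ℕ) by simp]
    rw [show Finset.Icc 1 1 = ({1} : Finset ℕ) by simp]
    simp only [Finset.sum_empty, zero_add, Finset.sum_singleton]
    rw [show 2 * Real.sin θ * Real.cos θ / Real.sin θ = 2 * Real.cos θ by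
      field_simp]
  | succ n hn ih =>
    intro hpos
    have hpos' : ∀ k : ℕ, 1 ≤ k → k ≤ n → 0 < Real.sin (k * θ) :=
      fun k h1 h2 => hpos k h1 (h2.trans (Nat.le_succ n))
    have IH := ih hpos'
    have hwn : 0 < Real.sin (n * θ) := hpos n hn (Nat.le_succ n)
    have hwn1 : 0 < Real.sin ((n + 1 : ℕ) * θ) := hpos (n+1) (by omega) le_rfl
    push_cast at hwn1
    -- sum splits
    have hsplit1 : ∑ k ∈ Finset.Icc 1 (n + 1 - 1), 2 * (a k * a (k + 1))
        = ∑ k ∈ Finset.Icc 1 (n - 1), 2 * (a k * a (k + 1)) + 2 * (a n * a (n + 1)) := by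
      rw [show n + 1 - 1 = (n - 1) + 1 by omega]
      rw [Finset.sum_Icc_succ_top (by omega)]
      rw [show n - 1 + 1 = n by omega]
    have hsplit2 : ∑ k ∈ Finset.Icc 1 (n + 1), a k ^ 2
        = ∑ k ∈ Finset.Icc 1 n, a k ^ 2 + a (n + 1) ^ 2 := by
      rw [Finset.sum_Icc_succ_top (by omega)]
    rw [hsplit1, hsplit2]
    push_cast
    -- key three-term identity: sin((n+2)θ) + sin(nθ) = 2 cos θ sin((n+1)θ)
    have hid : Real.sin (((n:ℝ) + 1 + 1) * θ) + Real.sin ((n:ℝ) * θ)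
        = 2 * Real.cos θ * Real.sin (((n:ℝ) + 1) * θ) := by
      rw [show ((n:ℝ) + 1 + 1) * θ = ((n:ℝ) + 1) * θ + θ by ring,
        show (n:ℝ) * θ = ((n:ℝ) + 1) * θ - θ by ring, Real.sin_add, Real.sin_sub]
      ring
    have hgm := amgm_wt hwn hwn1 (a n) (a (n + 1))
    -- boundary bookkeeping
    have hb : 2 * (a n * a (n + 1)) + (Real.sin (((n:ℝ) + 1 + 1) * θ) / Real.sin (((n:ℝ) + 1) * θ)) * a (n + 1) ^ 2
        ≤ (Real.sin (((n:ℝ) + 1) * θ) / Real.sin ((n:ℝ) * θ)) * a n ^ 2 + 2 * Real.cos θ * a (n + 1) ^ 2 := by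
      have h2 : (Real.sin ((n:ℝ) * θ) / Real.sin (((n:ℝ)+1) * θ)) * a (n+1) ^ 2
          + (Real.sin (((n:ℝ) + 1 + 1) * θ) / Real.sin (((n:ℝ) + 1) * θ)) * a (n + 1) ^ 2
          = 2 * Real.cos θ * a (n + 1) ^ 2 := by
        rw [div_mul_eq_mul_div, div_mul_eq_mul_div, ← add_div]
        rw [show Real.sin ((n:ℝ) * θ) * a (n+1) ^ 2 + Real.sin (((n:ℝ) + 1 + 1) * θ) * a (n + 1) ^ 2
          = (Real.sin (((n:ℝ) + 1 + 1) * θ) + Real.sin ((n:ℝ) * θ)) * a (n+1) ^ 2 by ring, hid]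
        field_simp
      linarith [hgm]
    linarith [IH, hb]

/-- Row (path) bound. -/
lemma row_bound (θ : ℝ) (n : ℕ) (hn : 1 ≤ n)
    (hpos : ∀ k : ℕ, 1 ≤ k → k ≤ n → 0 < Real.sin (k * θ))
    (hend : 0 ≤ Real.sin ((n + 1) * θ))
    (a : ℕ → ℝ) (hzero : a (n + 1) = 0) :
    ∑ k ∈ Finset.Icc 1 n, a k * a (k + 1) ≤ Real.cos θ * ∑ k ∈ Finset.Icc 1 n, a k ^ 2 := by
  have h := path_ind θ a n hn hpos
  have hwn : 0 < Real.sin (n * θ) := hpos n hn le_rfl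
  have hbd : 0 ≤ (Real.sin ((n + 1) * θ) / Real.sin (n * θ)) * a n ^ 2 :=
    mul_nonneg (div_nonneg hend hwn.le) (sq_nonneg _)
  have e1 : (n - 1) + 1 = n := by omega
  have hsplit := Finset.sum_Icc_succ_top (a := 1) (b := n - 1) (by omega)
    (fun k => a k * a (k + 1))
  rw [e1] at hsplit
  have hsum : ∑ k ∈ Finset.Icc 1 n, a k * a (k + 1)
      = ∑ k ∈ Finset.Icc 1 (n - 1), a k * a (k + 1) := by
    rw [hsplit, hzero, mul_zero, add_zero]
  have hms : ∑ k ∈ Finset.Icc 1 (n - 1), 2 * (a k * a (k + 1))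
      = 2 * ∑ k ∈ Finset.Icc 1 (n - 1), a k * a (k + 1) := by
    rw [Finset.mul_sum]
  linarith [h, hbd]

lemma sum_of_support_subset (g : ℤ × ℤ → ℝ) (s t : Finset (ℤ × ℤ))
    (h : ∀ p, g p ≠ 0 → p ∈ s ∧ p ∈ t) : ∑ p ∈ s, g p = ∑ p ∈ t, g p := by
  have h1 : ∑ p ∈ s, g p = ∑ p ∈ s ∩ t, g p := by
    refine (Finset.sum_subset Finset.inter_subset_left ?_).symm
    intro p hp hpn
    by_contra hg
    exact hpn (Finset.mem_inter.2 ⟨hp, (h p hg).2⟩)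
  have h2 : ∑ p ∈ t, g p = ∑ p ∈ s ∩ t, g p := by
    refine (Finset.sum_subset Finset.inter_subset_right ?_).symm
    intro p hp hpn
    by_contra hg
    exact hpn (Finset.mem_inter.2 ⟨(h p hg).1, hp⟩)
  rw [h1, h2]

lemma int_sum_Icc (N : ℕ) (f : ℤ → ℝ) :
    ∑ k ∈ Finset.Icc (1 : ℤ) (N : ℤ), f k = ∑ k ∈ Finset.Icc 1 N, f (k : ℤ) := by
  refine Finset.sum_nbij' (i := Int.toNat) (j := (Nat.cast : ℕ → ℤ)) ?_ ?_ ?_ ?_ ?_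
  · intro a ha; simp only [Finset.mem_Icc] at ha ⊢; omega
  · intro a ha; simp only [Finset.mem_Icc] at ha ⊢; omega
  · intro a ha; simp only [Finset.mem_Icc] at ha; omega
  · intro a ha; simp only [Finset.mem_Icc] at ha; omega
  · intro a ha; simp only [Finset.mem_Icc] at ha
    congr 1; omega

lemma addRight_symm_apply (v : ℤ × ℤ) (q : ℤ × ℤ) : (Equiv.addRight v).symm q = q - v := by
  simp [Equiv.addRight, sub_eq_add_neg]

/-- generic shift identity: summing `g` against a shifted argument. -/
lemma shifted_sum_eq (g : ℤ × ℤ → ℝ) (T : Finset (ℤ × ℤ)) (v : ℤ × ℤ)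
    (hsup : ∀ q, g q ≠ 0 → q ∈ T ∧ q - v ∈ T) :
    ∑ p ∈ T, g (p + v) = ∑ p ∈ T, g p := by
  have h1 : ∑ p ∈ T, g (p + v) = ∑ q ∈ T.map (Equiv.addRight v).toEmbedding, g q := by
    rw [Finset.sum_map]
    rfl
  rw [h1]
  apply sum_of_support_subset
  intro q hq
  refine ⟨?_, (hsup q hq).1⟩
  rw [Finset.mem_map_equiv, addRight_symm_apply]
  exact (hsup q hq).2

/-- A rectangle `S = {1,…,N} × {1,…,M}` of vertices of `ℤ²` is a `Λ`-set with
`Λ = (1/2)·sin⁻²(π/(2·max(N,M)+2))`. -/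
theorem rectangle_lambda_set (N M : ℕ) (hN : 1 ≤ N) (hM : 1 ≤ M) (φ : ℤ × ℤ → ℂ)
    (hsupp : ∀ p : ℤ × ℤ, p ∉ Set.Icc (1 : ℤ) N ×ˢ Set.Icc (1 : ℤ) M → φ p = 0) :
    Real.sqrt (∑' p : ℤ × ℤ, ‖φ p‖ ^ 2) ≤
      (1 / 2) * (Real.sin (π / (2 * max N M + 2)))⁻¹ ^ 2 *
        Real.sqrt (∑' p : ℤ × ℤ, ‖lapZ2 φ p‖ ^ 2) := by
  classical
  set K : ℕ := max N M with hK
  set x : ℝ := π / (2 * (K : ℝ) + 2) with hxdef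
  set θ : ℝ := π / ((K : ℝ) + 1) with hθdef
  have hNK : N ≤ K := le_max_left _ _
  have hMK : M ≤ K := le_max_right _ _
  have h1K : (1:ℝ) ≤ (K:ℝ) := by exact_mod_cast hN.trans hNK
  have hKpos : (0:ℝ) < (K:ℝ) + 1 := by positivity
  have hθx : θ = 2 * x := by
    rw [hxdef, hθdef, show 2*(K:ℝ)+2 = 2*((K:ℝ)+1) by ring]
    field_simp
  have hxpos : 0 < x := by rw [hxdef]; positivity
  have hxlt : x < π := by
    rw [hxdef]
    apply div_lt_self Real.pi_pos
    linarith
  have hsx : 0 < Real.sin x := Real.sin_pos_of_pos_of_lt_pi hxpos hxlt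
  have hcosθ : Real.cos θ = 1 - 2 * Real.sin x ^ 2 := by
    rw [hθx, Real.cos_two_mul, Real.cos_sq']; ring
  have hθpos : 0 < θ := by rw [hθdef]; positivity
  have hpos : ∀ k : ℕ, 1 ≤ k → k ≤ K → 0 < Real.sin (k * θ) := by
    intro k h1 h2
    apply Real.sin_pos_of_pos_of_lt_pi
    · have hk0 : (0:ℝ) < (k:ℝ) := by exact_mod_cast h1
      exact mul_pos hk0 hθpos
    · have hk : (k:ℝ) < (K:ℝ) + 1 := by exact_mod_cast Nat.lt_succ_of_le h2
      calc (k:ℝ) * θ = π * ((k:ℝ) / ((K:ℝ)+1)) := by rw [hθdef]; ring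
        _ < π * 1 := by
            apply mul_lt_mul_of_pos_left _ Real.pi_pos
            rw [div_lt_one hKpos]; exact hk
        _ = π := mul_one π
  have hend : ∀ n : ℕ, n ≤ K → 0 ≤ Real.sin (((n:ℝ) + 1) * θ) := by
    intro n h2
    apply Real.sin_nonneg_of_nonneg_of_le_pi
    · have : (0:ℝ) ≤ (n:ℝ) + 1 := by positivity
      exact mul_nonneg this hθpos.le
    · have hk : (n:ℝ) + 1 ≤ (K:ℝ) + 1 := by
        have : (n:ℝ) ≤ (K:ℝ) := by exact_mod_cast h2
        linarith
      calc ((n:ℝ)+1) * θ = π * (((n:ℝ)+1) / ((K:ℝ)+1)) := by rw [hθdef]; ring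
        _ ≤ π * 1 := by
            apply mul_le_mul_of_nonneg_left _ Real.pi_pos.le
            rw [div_le_one hKpos]; exact hk
        _ = π := mul_one π
  -- finsets
  set T : Finset (ℤ × ℤ) := Finset.Icc (1:ℤ) (N:ℤ) ×ˢ Finset.Icc (1:ℤ) (M:ℤ) with hT
  set B : Finset (ℤ × ℤ) := Finset.Icc (-1:ℤ) ((N:ℤ)+1) ×ˢ Finset.Icc (-1:ℤ) ((M:ℤ)+1) with hB
  have hmemT : ∀ p : ℤ × ℤ, p ∈ T ↔ 1 ≤ p.1 ∧ p.1 ≤ (N:ℤ) ∧ 1 ≤ p.2 ∧ p.2 ≤ (M:ℤ) := by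
    intro p; rw [hT, Finset.mem_product]
    simp [Finset.mem_Icc]
    tauto
  have hmemB : ∀ p : ℤ × ℤ, p ∈ B ↔ -1 ≤ p.1 ∧ p.1 ≤ (N:ℤ)+1 ∧ -1 ≤ p.2 ∧ p.2 ≤ (M:ℤ)+1 := by
    intro p; rw [hB, Finset.mem_product]
    simp [Finset.mem_Icc]
    tauto
  have hz : ∀ u v : ℤ, (u < 1 ∨ (N:ℤ) < u ∨ v < 1 ∨ (M:ℤ) < v) → φ (u, v) = 0 := by
    intro u v h
    apply hsupp
    intro hmem
    simp only [Set.mem_prod, Set.mem_Icc] at hmem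
    omega
  have hφ0T : ∀ p : ℤ × ℤ, p ∉ T → φ p = 0 := by
    intro p hp
    rw [hmemT] at hp; push_neg at hp
    rw [← Prod.mk.eta (p := p)]
    apply hz
    omega
  have hTB : T ⊆ B := by
    intro p hp
    rw [hmemT] at hp
    rw [hmemB]
    omega
  have hlap0 : ∀ p : ℤ × ℤ, p ∉ B → lapZ2 φ p = 0 := by
    intro p hp
    rw [hmemB] at hp; push_neg at hp
    have h1 : φ (p.1 - 1, p.2) = 0 := hz _ _ (by omega)
    have h2 : φ (p.1 + 1, p.2) = 0 := hz _ _ (by omega)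
    have h3 : φ (p.1, p.2 - 1) = 0 := hz _ _ (by omega)
    have h4 : φ (p.1, p.2 + 1) = 0 := hz _ _ (by omega)
    have h0 : φ p = 0 := hφ0T p (by rw [hmemT]; omega)
    simp only [lapZ2, h0, h1, h2, h3, h4]
    ring
  -- sums and support
  set P : ℝ := ∑ p ∈ T, ‖φ p‖ ^ 2 with hPdef
  set Q : ℝ := ∑ p ∈ B, ‖lapZ2 φ p‖ ^ 2 with hQdef
  have htP : (∑' p : ℤ × ℤ, ‖φ p‖ ^ 2) = P :=
    tsum_eq_sum (by intro p hp; rw [hφ0T p hp]; simp)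
  have htQ : (∑' p : ℤ × ℤ, ‖lapZ2 φ p‖ ^ 2) = Q :=
    tsum_eq_sum (by intro p hp; rw [hlap0 p hp]; simp)
  have hP0 : 0 ≤ P := Finset.sum_nonneg fun p _ => sq_nonneg _
  have hQ0 : 0 ≤ Q := Finset.sum_nonneg fun p _ => sq_nonneg _
  -- shift identities
  have hpadd : ∀ (p : ℤ × ℤ) (u v : ℤ), p + ((u, v) : ℤ × ℤ) = (p.1 + u, p.2 + v) := by
    intro p u v; cases p; simp
  have hpsub : ∀ (p : ℤ × ℤ) (u v : ℤ), p - ((u, v) : ℤ × ℤ) = (p.1 - u, p.2 - v) := by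
    intro p u v; cases p; simp
  have hmemT' : ∀ p : ℤ × ℤ, ‖φ p‖ ≠ 0 → p ∈ T := by
    intro p hp
    by_contra h
    exact hp (by rw [hφ0T p h]; simp)
  have hS1 : ∑ p ∈ T, ‖φ p‖ * ‖φ (p.1 - 1, p.2)‖
      = ∑ p ∈ T, ‖φ p‖ * ‖φ (p.1 + 1, p.2)‖ := by
    set g1 : ℤ × ℤ → ℝ := fun q => ‖φ q‖ * ‖φ (q.1 + 1, q.2)‖ with hg1
    have hgeq : ∀ p : ℤ × ℤ, ‖φ p‖ * ‖φ (p.1 - 1, p.2)‖ = g1 (p + ((-1, 0) : ℤ × ℤ)) := by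
      intro p
      rw [hg1]
      simp only [hpadd]
      rw [show p.1 + -1 = p.1 - 1 by ring, show p.2 + (0:ℤ) = p.2 by ring]
      rw [show p.1 - 1 + 1 = p.1 by ring, Prod.mk.eta]
      ring
    calc ∑ p ∈ T, ‖φ p‖ * ‖φ (p.1 - 1, p.2)‖
        = ∑ p ∈ T, g1 (p + ((-1, 0) : ℤ × ℤ)) := Finset.sum_congr rfl fun p _ => hgeq p
      _ = ∑ p ∈ T, g1 p := by
          apply shifted_sum_eq
          intro q hq
          refine ⟨hmemT' q (left_ne_zero_of_mul hq), ?_⟩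
          rw [hpsub, show q.1 - (-1) = q.1 + 1 by ring, show q.2 - (0:ℤ) = q.2 by ring]
          exact hmemT' _ (right_ne_zero_of_mul hq)
  have hS2 : ∑ p ∈ T, ‖φ p‖ * ‖φ (p.1, p.2 - 1)‖
      = ∑ p ∈ T, ‖φ p‖ * ‖φ (p.1, p.2 + 1)‖ := by
    set g2 : ℤ × ℤ → ℝ := fun q => ‖φ q‖ * ‖φ (q.1, q.2 + 1)‖ with hg2
    have hgeq : ∀ p : ℤ × ℤ, ‖φ p‖ * ‖φ (p.1, p.2 - 1)‖ = g2 (p + ((0, -1) : ℤ × ℤ)) := by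
      intro p
      rw [hg2]
      simp only [hpadd]
      rw [show p.1 + (0:ℤ) = p.1 by ring, show p.2 + -1 = p.2 - 1 by ring]
      rw [show p.2 - 1 + 1 = p.2 by ring, Prod.mk.eta]
      ring
    calc ∑ p ∈ T, ‖φ p‖ * ‖φ (p.1, p.2 - 1)‖
        = ∑ p ∈ T, g2 (p + ((0, -1) : ℤ × ℤ)) := Finset.sum_congr rfl fun p _ => hgeq p
      _ = ∑ p ∈ T, g2 p := by
          apply shifted_sum_eq
          intro q hq
          refine ⟨hmemT' q (left_ne_zero_of_mul hq), ?_⟩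
          rw [hpsub, show q.1 - (0:ℤ) = q.1 by ring, show q.2 - (-1) = q.2 + 1 by ring]
          exact hmemT' _ (right_ne_zero_of_mul hq)
  -- row bounds
  have hzN : ∀ l : ℤ, φ ((N : ℤ) + 1, l) = 0 := fun l => hz _ _ (by omega)
  have hzM : ∀ k : ℤ, φ (k, (M : ℤ) + 1) = 0 := fun k => hz _ _ (by omega)
  have hrow1 : ∑ p ∈ T, ‖φ p‖ * ‖φ (p.1 + 1, p.2)‖ ≤ Real.cos θ * P := by
    have hL : ∑ p ∈ T, ‖φ p‖ * ‖φ (p.1 + 1, p.2)‖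
        = ∑ l ∈ Finset.Icc (1:ℤ) (M:ℤ), ∑ k ∈ Finset.Icc (1:ℤ) (N:ℤ),
            ‖φ (k, l)‖ * ‖φ (k + 1, l)‖ := by
      rw [hT, Finset.sum_product]
      rw [Finset.sum_comm]
    have hR : P = ∑ l ∈ Finset.Icc (1:ℤ) (M:ℤ), ∑ k ∈ Finset.Icc (1:ℤ) (N:ℤ), ‖φ (k, l)‖ ^ 2 := by
      rw [hPdef, hT, Finset.sum_product, Finset.sum_comm]
    rw [hL, hR, Finset.mul_sum]
    apply Finset.sum_le_sum
    intro l _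
    have hne : ∑ k ∈ Finset.Icc (1:ℤ) (N:ℤ), ‖φ (k, l)‖ * ‖φ (k + 1, l)‖
        = ∑ k ∈ Finset.Icc 1 N, ‖φ (((k:ℕ):ℤ), l)‖ * ‖φ (((k:ℕ):ℤ) + 1, l)‖ :=
      int_sum_Icc N (fun k => ‖φ (k, l)‖ * ‖φ (k + 1, l)‖)
    have hsq : ∑ k ∈ Finset.Icc (1:ℤ) (N:ℤ), ‖φ (k, l)‖ ^ 2
        = ∑ k ∈ Finset.Icc 1 N, ‖φ (((k:ℕ):ℤ), l)‖ ^ 2 :=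
      int_sum_Icc N (fun k => ‖φ (k, l)‖ ^ 2)
    rw [hne, hsq]
    have hrb := row_bound θ N hN (fun k h1 h2 => hpos k h1 (h2.trans hNK))
      (hend N hNK) (fun k : ℕ => ‖φ (((k:ℕ):ℤ), l)‖)
      (by push_cast; rw [hzN l]; simp)
    refine le_trans (le_of_eq ?_) hrb
    apply Finset.sum_congr rfl
    intro k _
    push_cast
    ring
  have hrow2 : ∑ p ∈ T, ‖φ p‖ * ‖φ (p.1, p.2 + 1)‖ ≤ Real.cos θ * P := by
    have hL : ∑ p ∈ T, ‖φ p‖ * ‖φ (p.1, p.2 + 1)‖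
        = ∑ k ∈ Finset.Icc (1:ℤ) (N:ℤ), ∑ l ∈ Finset.Icc (1:ℤ) (M:ℤ),
            ‖φ (k, l)‖ * ‖φ (k, l + 1)‖ := by
      rw [hT, Finset.sum_product]
    have hR : P = ∑ k ∈ Finset.Icc (1:ℤ) (N:ℤ), ∑ l ∈ Finset.Icc (1:ℤ) (M:ℤ), ‖φ (k, l)‖ ^ 2 := by
      rw [hPdef, hT, Finset.sum_product]
    rw [hL, hR, Finset.mul_sum]
    apply Finset.sum_le_sum
    intro k _
    have hne : ∑ l ∈ Finset.Icc (1:ℤ) (M:ℤ), ‖φ (k, l)‖ * ‖φ (k, l + 1)‖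
        = ∑ l ∈ Finset.Icc 1 M, ‖φ (k, ((l:ℕ):ℤ))‖ * ‖φ (k, ((l:ℕ):ℤ) + 1)‖ :=
      int_sum_Icc M (fun l => ‖φ (k, l)‖ * ‖φ (k, l + 1)‖)
    have hsq : ∑ l ∈ Finset.Icc (1:ℤ) (M:ℤ), ‖φ (k, l)‖ ^ 2
        = ∑ l ∈ Finset.Icc 1 M, ‖φ (k, ((l:ℕ):ℤ))‖ ^ 2 :=
      int_sum_Icc M (fun l => ‖φ (k, l)‖ ^ 2)
    rw [hne, hsq]
    have hrb := row_bound θ M hM (fun l h1 h2 => hpos l h1 (h2.trans hMK))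
      (hend M hMK) (fun l : ℕ => ‖φ (k, ((l:ℕ):ℤ))‖)
      (by push_cast; rw [hzM k]; simp)
    refine le_trans (le_of_eq ?_) hrb
    apply Finset.sum_congr rfl
    intro l _
    push_cast
    ring
  -- energy
  set E : ℝ := ∑ p ∈ T, ((starRingEnd ℂ) (φ p) * lapZ2 φ p).re with hEdef
  set R : ℝ := ∑ p ∈ T, ((starRingEnd ℂ) (φ p) *
      (φ (p.1 - 1, p.2) + φ (p.1 + 1, p.2) + φ (p.1, p.2 - 1) + φ (p.1, p.2 + 1))).re with hRdef
  have hpoint : ∀ z w : ℂ, ((starRingEnd ℂ) z * (z - w / 4)).re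
      = ‖z‖ ^ 2 - ((starRingEnd ℂ) z * w).re / 4 := by
    intro z w
    have h1 : (starRingEnd ℂ) z * (z - w / 4)
        = ((starRingEnd ℂ) z * z) - ((4⁻¹ : ℝ) : ℂ) * ((starRingEnd ℂ) z * w) := by
      push_cast
      ring
    rw [h1, Complex.sub_re, Complex.re_ofReal_mul]
    congr 1
    · rw [mul_comm, Complex.mul_conj, Complex.ofReal_re, Complex.normSq_eq_norm_sq]
    · ring
  have hE : E = P - R / 4 := by
    rw [hEdef, hRdef, hPdef]
    rw [Finset.sum_div, ← Finset.sum_sub_distrib]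
    apply Finset.sum_congr rfl
    intro p _
    exact hpoint (φ p) _
  have hterm : ∀ z b1 b2 b3 b4 : ℂ, ((starRingEnd ℂ) z * (b1 + b2 + b3 + b4)).re
      ≤ ‖z‖ * ‖b1‖ + ‖z‖ * ‖b2‖ + ‖z‖ * ‖b3‖ + ‖z‖ * ‖b4‖ := by
    intro z b1 b2 b3 b4
    calc ((starRingEnd ℂ) z * (b1 + b2 + b3 + b4)).re
        ≤ ‖(starRingEnd ℂ) z * (b1 + b2 + b3 + b4)‖ := by
          exact Complex.re_le_norm _
      _ = ‖z‖ * ‖b1 + b2 + b3 + b4‖ := by rw [norm_mul, RCLike.norm_conj]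
      _ ≤ ‖z‖ * (‖b1‖ + ‖b2‖ + ‖b3‖ + ‖b4‖) := by
          apply mul_le_mul_of_nonneg_left _ (norm_nonneg z)
          calc ‖b1 + b2 + b3 + b4‖ ≤ ‖b1 + b2 + b3‖ + ‖b4‖ := norm_add_le _ _
            _ ≤ (‖b1 + b2‖ + ‖b3‖) + ‖b4‖ := by linarith [norm_add_le (b1 + b2) b3]
            _ ≤ ((‖b1‖ + ‖b2‖) + ‖b3‖) + ‖b4‖ := by linarith [norm_add_le b1 b2]
      _ = ‖z‖ * ‖b1‖ + ‖z‖ * ‖b2‖ + ‖z‖ * ‖b3‖ + ‖z‖ * ‖b4‖ := by ring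
  have hR4 : R ≤ 4 * (Real.cos θ * P) := by
    have step1 : R ≤ ∑ p ∈ T, (‖φ p‖ * ‖φ (p.1 - 1, p.2)‖ + ‖φ p‖ * ‖φ (p.1 + 1, p.2)‖
        + ‖φ p‖ * ‖φ (p.1, p.2 - 1)‖ + ‖φ p‖ * ‖φ (p.1, p.2 + 1)‖) := by
      rw [hRdef]
      exact Finset.sum_le_sum fun p _ => hterm _ _ _ _ _
    have step2 : ∑ p ∈ T, (‖φ p‖ * ‖φ (p.1 - 1, p.2)‖ + ‖φ p‖ * ‖φ (p.1 + 1, p.2)‖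
        + ‖φ p‖ * ‖φ (p.1, p.2 - 1)‖ + ‖φ p‖ * ‖φ (p.1, p.2 + 1)‖)
        = ∑ p ∈ T, ‖φ p‖ * ‖φ (p.1 - 1, p.2)‖ + ∑ p ∈ T, ‖φ p‖ * ‖φ (p.1 + 1, p.2)‖
          + ∑ p ∈ T, ‖φ p‖ * ‖φ (p.1, p.2 - 1)‖ + ∑ p ∈ T, ‖φ p‖ * ‖φ (p.1, p.2 + 1)‖ := by
      rw [← Finset.sum_add_distrib, ← Finset.sum_add_distrib, ← Finset.sum_add_distrib]
    rw [step2] at step1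
    rw [hS1, hS2] at step1
    linarith [hrow1, hrow2]
  have hEP : 2 * Real.sin x ^ 2 * P ≤ E := by
    rw [hE]
    have h1 : R / 4 ≤ Real.cos θ * P := by linarith
    rw [hcosθ] at h1
    linarith
  -- Cauchy–Schwarz
  have hEB : E = ∑ p ∈ B, ((starRingEnd ℂ) (φ p) * lapZ2 φ p).re := by
    rw [hEdef]
    apply Finset.sum_subset hTB
    intro p _ hpT
    rw [hφ0T p hpT]
    simp
  have hPB : ∑ p ∈ B, ‖φ p‖ ^ 2 = P := by
    rw [hPdef]
    refine (Finset.sum_subset hTB ?_).symm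
    intro p _ hpT
    rw [hφ0T p hpT]
    simp
  have hCS : E ≤ Real.sqrt P * Real.sqrt Q := by
    rw [hEB]
    calc ∑ p ∈ B, ((starRingEnd ℂ) (φ p) * lapZ2 φ p).re
        ≤ ∑ p ∈ B, ‖φ p‖ * ‖lapZ2 φ p‖ := by
          apply Finset.sum_le_sum
          intro p _
          calc ((starRingEnd ℂ) (φ p) * lapZ2 φ p).re
              ≤ ‖(starRingEnd ℂ) (φ p) * lapZ2 φ p‖ := by
                exact Complex.re_le_norm _
            _ = ‖φ p‖ * ‖lapZ2 φ p‖ := by rw [norm_mul, RCLike.norm_conj]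
      _ ≤ Real.sqrt (∑ p ∈ B, ‖φ p‖ ^ 2) * Real.sqrt (∑ p ∈ B, ‖lapZ2 φ p‖ ^ 2) :=
          Real.sum_mul_le_sqrt_mul_sqrt _ _ _
      _ = Real.sqrt P * Real.sqrt Q := by rw [hPB, hQdef]
  -- final assembly
  rw [htP, htQ]
  have hkey : 2 * Real.sin x ^ 2 * (Real.sqrt P * Real.sqrt P) ≤ Real.sqrt P * Real.sqrt Q := by
    rw [Real.mul_self_sqrt hP0]
    linarith
  rcases eq_or_lt_of_le (Real.sqrt_nonneg P) with h0 | hps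
  · rw [← h0]
    exact mul_nonneg (mul_nonneg (by norm_num) (sq_nonneg _)) (Real.sqrt_nonneg _)
  · have hq : 2 * Real.sin x ^ 2 * Real.sqrt P ≤ Real.sqrt Q := by
      have h' : 2 * Real.sin x ^ 2 * Real.sqrt P * Real.sqrt P ≤ Real.sqrt Q * Real.sqrt P := by
        have e1 : 2 * Real.sin x ^ 2 * Real.sqrt P * Real.sqrt P
            = 2 * Real.sin x ^ 2 * (Real.sqrt P * Real.sqrt P) := by ring
        have e2 : Real.sqrt Q * Real.sqrt P = Real.sqrt P * Real.sqrt Q := by ring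
        linarith [hkey]
      exact le_of_mul_le_mul_right h' hps
    rw [show (1 / 2 : ℝ) * (Real.sin x)⁻¹ ^ 2 * Real.sqrt Q = Real.sqrt Q / (2 * Real.sin x ^ 2) by
      field_simp]
    rw [le_div_iff₀ (mul_pos two_pos (pow_pos hsx 2))]
    linarith
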